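/- For every integer n ≥ 0 and reals k, α, β, δ with either (β > 0 and α ≠ 0) or (β < 0 and α < 0), the integrals I_n(k; α, β, δ) = ∫_k^∞ e^{αx}·Hh_n(βx − δ) dx converge and satisfy the recursion I_n(k; α, β, δ) = −(e^{αk}/α)·Hh_n(βk − δ) + (β/α)·I_{n−1}(k; α, β, δ). -/

import Mathlib

open MeasureTheory Set Real Filter

/-- Gaussian-type exponential bound. -/
lemma exp_sq_le (u M : ℝ) : Real.exp (-u ^ 2 / 2) ≤ Real.exp (M ^ 2 / 2 - M * u) := by
  apply Real.exp_le_exp.2; nlinarith [sq_nonneg (u - M)]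

/-- Polynomial absorbed by exponential. -/
lemma pow_le_exp' {c : ℝ} (hc : 0 < c) (m : ℕ) {s : ℝ} (hs : 0 ≤ s) :
    s ^ m ≤ (m.factorial : ℝ) / c ^ m * Real.exp (c * s) := by
  have h := Real.pow_div_factorial_le_exp (c * s) (mul_nonneg hc.le hs) m
  have hcm : (0:ℝ) < c ^ m := by positivity
  have hfm : (0:ℝ) < (m.factorial : ℝ) := by positivity
  rw [div_le_iff₀ hfm, mul_pow] at h
  rw [div_mul_eq_mul_div, le_div_iff₀ hcm]
  nlinarith [h]

/-- Core integrability on `Ioi 0`. -/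
lemma integrableOn_core (m : ℕ) (x : ℝ) :
    IntegrableOn (fun s => s ^ m * Real.exp (-(s + x) ^ 2 / 2)) (Ioi (0:ℝ)) := by
  have hint : IntegrableOn
      (fun s => ((m.factorial : ℝ) / (1/2) ^ m * Real.exp (1/2 - x)) * Real.exp (-(1/2) * s))
      (Ioi (0:ℝ)) := (exp_neg_integrableOn_Ioi 0 (by norm_num)).const_mul _
  apply hint.mono'
  · exact (Continuous.mul (by fun_prop) (by fun_prop)).aestronglyMeasurable
  · filter_upwards [ae_restrict_mem measurableSet_Ioi] with s hs
    have hs0 : (0:ℝ) ≤ s := (le_of_lt hs)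
    rw [norm_mul, norm_pow, Real.norm_eq_abs, Real.norm_eq_abs, abs_of_nonneg hs0,
      abs_of_nonneg (Real.exp_pos _).le]
    calc s ^ m * Real.exp (-(s + x) ^ 2 / 2)
        ≤ ((m.factorial : ℝ) / (1/2) ^ m * Real.exp ((1/2) * s)) *
          Real.exp ((1:ℝ) ^ 2 / 2 - 1 * (s + x)) := by
          apply mul_le_mul (pow_le_exp' (by norm_num) m hs0) (exp_sq_le _ 1)
            (Real.exp_pos _).le
          positivity
      _ = ((m.factorial : ℝ) / (1/2) ^ m * Real.exp (1/2 - x)) * Real.exp (-(1/2) * s) := by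
          rw [mul_assoc, ← Real.exp_add, mul_assoc, ← Real.exp_add]
          ring_nf

lemma preimage_add_Ioi (x : ℝ) : (fun s : ℝ => s + x) ⁻¹' Ioi x = Ioi 0 := by
  ext s; simp

lemma shift_integral (f : ℝ → ℝ) (x : ℝ) :
    ∫ t in Ioi x, f t = ∫ s in Ioi (0:ℝ), f (s + x) := by
  rw [← preimage_add_Ioi x]
  exact ((measurePreserving_add_right volume x).setIntegral_preimage_emb
    (MeasurableEquiv.addRight x).measurableEmbedding f (Ioi x)).symm

lemma shift_integrableOn {f : ℝ → ℝ} {x : ℝ}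
    (h : IntegrableOn (fun s => f (s + x)) (Ioi (0:ℝ))) : IntegrableOn f (Ioi x) := by
  have := ((measurePreserving_add_right volume x).integrableOn_comp_preimage
    (MeasurableEquiv.addRight x).measurableEmbedding (f := f) (s := Ioi x))
  rw [preimage_add_Ioi x] at this
  exact this.1 h

lemma integrableOn_Hh_core (m : ℕ) (x : ℝ) :
    IntegrableOn (fun t => (t - x) ^ m * Real.exp (-t ^ 2 / 2)) (Ioi x) := by
  apply shift_integrableOn
  simpa using integrableOn_core m x

/-- The `Hh` functions: `Hh₋₁(x) = e^{−x²/2}` and, for `n ≥ 0`,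
`Hh_n(x) = (1/n!)·∫_x^∞ (t − x)^n · e^{−t²/2} dt`. -/
noncomputable def Hh (n : ℤ) (x : ℝ) : ℝ :=
  if n = -1 then Real.exp (-x ^ 2 / 2)
  else if 0 ≤ n then
    (1 / (Nat.factorial n.toNat : ℝ))
      * ∫ t in Set.Ioi x, (t - x) ^ n.toNat * Real.exp (-t ^ 2 / 2)
  else 0

lemma Hh_natCast (m : ℕ) (x : ℝ) :
    Hh (m : ℤ) x = (1 / (m.factorial : ℝ)) * ∫ s in Ioi (0:ℝ), s ^ m * Real.exp (-(s + x) ^ 2 / 2) := by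
  rw [Hh]
  have h1 : (m : ℤ) ≠ -1 := by omega
  rw [if_neg h1, if_pos (by positivity), Int.toNat_natCast, shift_integral]
  simp

lemma Hh_neg_one (x : ℝ) : Hh (-1) x = Real.exp (-x ^ 2 / 2) := by rw [Hh]; simp

lemma core_bound (m : ℕ) (x : ℝ) {s : ℝ} (hs : 0 ≤ s) :
    s ^ m * Real.exp (-(s + x) ^ 2 / 2)
      ≤ ((m.factorial : ℝ) / (1/2) ^ m * Real.exp (1/2 - x)) * Real.exp (-(1/2) * s) := by
  calc s ^ m * Real.exp (-(s + x) ^ 2 / 2)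
      ≤ ((m.factorial : ℝ) / (1/2) ^ m * Real.exp ((1/2) * s)) *
        Real.exp ((1:ℝ) ^ 2 / 2 - 1 * (s + x)) := by
        apply mul_le_mul (pow_le_exp' (by norm_num) m hs) (exp_sq_le _ 1)
          (Real.exp_pos _).le
        positivity
    _ = ((m.factorial : ℝ) / (1/2) ^ m * Real.exp (1/2 - x)) * Real.exp (-(1/2) * s) := by
        rw [mul_assoc, ← Real.exp_add, mul_assoc, ← Real.exp_add]
        ring_nf

lemma integrableOn_core' (m : ℕ) (x : ℝ) :
    IntegrableOn (fun s => s ^ m * ((s + x) * Real.exp (-(s + x) ^ 2 / 2))) (Ioi (0:ℝ)) := by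
  have h := (integrableOn_core (m+1) x).add ((integrableOn_core m x).const_mul x)
  apply MeasureTheory.IntegrableOn.congr_fun h _ measurableSet_Ioi
  intro s _
  simp only [Pi.add_apply]
  ring

lemma tendsto_core (m : ℕ) (x : ℝ) :
    Tendsto (fun s => s ^ m * Real.exp (-(s + x) ^ 2 / 2)) atTop (nhds 0) := by
  have hb : Tendsto (fun s : ℝ =>
      ((m.factorial : ℝ) / (1/2) ^ m * Real.exp (1/2 - x)) * Real.exp (-(1/2) * s))
      atTop (nhds 0) := by
    rw [show (0:ℝ) = ((m.factorial : ℝ) / (1/2) ^ m * Real.exp (1/2 - x)) * 0 by ring]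
    apply Tendsto.const_mul
    apply Real.tendsto_exp_atBot.comp
    exact (tendsto_const_mul_atBot_of_neg (by norm_num : (-(1/2) : ℝ) < 0)).2 tendsto_id
  apply squeeze_zero' _ _ hb
  · filter_upwards [eventually_ge_atTop (0:ℝ)] with s hs
    positivity
  · filter_upwards [eventually_ge_atTop (0:ℝ)] with s hs
    exact core_bound m x hs

lemma hasDerivAt_core (m : ℕ) (x s : ℝ) :
    HasDerivAt (fun s => -(s ^ m * Real.exp (-(s + x) ^ 2 / 2)))
      (s ^ m * ((s + x) * Real.exp (-(s + x) ^ 2 / 2))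
        - (m : ℝ) * (s ^ (m - 1) * Real.exp (-(s + x) ^ 2 / 2))) s := by
  have h1 : HasDerivAt (fun s : ℝ => s + x) 1 s := (hasDerivAt_id s).add_const x
  have h2 : HasDerivAt (fun s : ℝ => -(s + x) ^ 2 / 2) (-(s + x)) s := by
    have := (h1.pow 2).neg.div_const 2
    refine this.congr_deriv ?_
    ring
  have h3 := h2.exp
  have h4 := hasDerivAt_pow m s
  have h5 := (h4.mul h3).neg
  refine h5.congr_deriv ?_
  ring

lemma parts (m : ℕ) (x : ℝ) :
    ∫ s in Ioi (0:ℝ), s ^ m * ((s + x) * Real.exp (-(s + x) ^ 2 / 2))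
      = (m : ℝ) * (∫ s in Ioi (0:ℝ), s ^ (m - 1) * Real.exp (-(s + x) ^ 2 / 2))
        + (if m = 0 then Real.exp (-x ^ 2 / 2) else 0) := by
  have hint1 := integrableOn_core' m x
  have hint2 := (integrableOn_core (m - 1) x).const_mul (m : ℝ)
  have key := integral_Ioi_of_hasDerivAt_of_tendsto' (a := (0:ℝ))
    (f := fun s => -(s ^ m * Real.exp (-(s + x) ^ 2 / 2)))
    (f' := fun s => s ^ m * ((s + x) * Real.exp (-(s + x) ^ 2 / 2))
        - (m : ℝ) * (s ^ (m - 1) * Real.exp (-(s + x) ^ 2 / 2)))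
    (m := 0)
    (fun s _ => hasDerivAt_core m x s)
    (hint1.sub hint2)
    (by simpa using (tendsto_core m x).neg)
  rw [integral_sub hint1 hint2, MeasureTheory.integral_const_mul] at key
  have h0 : -((0:ℝ) ^ m * Real.exp (-(0 + x) ^ 2 / 2)) = -(if m = 0 then Real.exp (-x ^ 2 / 2) else 0) := by
    rcases Nat.eq_zero_or_pos m with hm | hm
    · subst hm; simp
    · rw [zero_pow (by omega), if_neg (by omega)]; ring
  simp only [show ((fun s => -(s ^ m * Real.exp (-(s + x) ^ 2 / 2))) 0) = -(if m = 0 then Real.exp (-x ^ 2 / 2) else 0) from h0] at key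
  linarith [key]

lemma hasDerivAt_Hh (m : ℕ) (x₀ : ℝ) :
    HasDerivAt (Hh (m : ℤ)) (-Hh ((m : ℤ) - 1) x₀) x₀ := by
  set F : ℝ → ℝ → ℝ := fun x s => s ^ m * Real.exp (-(s + x) ^ 2 / 2) with hF
  set F' : ℝ → ℝ → ℝ := fun x s => -(s ^ m * ((s + x) * Real.exp (-(s + x) ^ 2 / 2))) with hF'
  have hmeas : ∀ x : ℝ, AEStronglyMeasurable (F x) (volume.restrict (Ioi (0:ℝ))) := fun x =>
    (Continuous.mul (by fun_prop) (by fun_prop)).aestronglyMeasurable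
  have hderiv : ∀ x s : ℝ, HasDerivAt (fun x => F x s) (F' x s) x := by
    intro x s
    have h1 : HasDerivAt (fun x : ℝ => s + x) 1 x := (hasDerivAt_id x).const_add s
    have h2 : HasDerivAt (fun x : ℝ => -(s + x) ^ 2 / 2) (-(s + x)) x := by
      have := (h1.pow 2).neg.div_const 2
      refine this.congr_deriv ?_
      ring
    have h3 := h2.exp.const_mul (s ^ m)
    refine h3.congr_deriv ?_
    simp only [hF']
    ring
  have key := hasDerivAt_integral_of_dominated_loc_of_deriv_le
    (μ := volume.restrict (Ioi (0:ℝ))) (x₀ := x₀) (s := Metric.ball x₀ 1) (F := F) (F' := F')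
    (bound := fun s => (((m+1).factorial : ℝ) / (1/2) ^ (m+1) +
      (|x₀| + 1) * ((m.factorial : ℝ) / (1/2) ^ m)) * Real.exp (3/2 - x₀) * Real.exp (-(1/2) * s))
    (Metric.ball_mem_nhds x₀ one_pos)
    (Filter.Eventually.of_forall hmeas)
    (integrableOn_core m x₀)
    ((Continuous.mul (by fun_prop) (by fun_prop)).aestronglyMeasurable.neg)
    (by
      filter_upwards [ae_restrict_mem measurableSet_Ioi] with s hs
      intro x hx
      have hs0 : (0:ℝ) ≤ s := le_of_lt hs
      have hxb : |x - x₀| < 1 := by simpa [Real.dist_eq] using hx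
      have hx1 : x₀ - 1 < x := by cases' abs_lt.1 hxb with h1 h2; linarith
      have hx2 : |x| ≤ |x₀| + 1 := by
        cases' abs_lt.1 hxb with h1 h2
        cases' abs_le.1 (le_refl |x₀|) with h3 h4
        rw [abs_le]; constructor <;> [linarith [neg_abs_le x₀]; linarith [le_abs_self x₀]]
      have hE : Real.exp (1/2 - x) ≤ Real.exp (3/2 - x₀) := by
        apply Real.exp_le_exp.2; linarith
      have hb1 : s ^ (m+1) * Real.exp (-(s + x) ^ 2 / 2)
          ≤ ((m+1).factorial : ℝ) / (1/2) ^ (m+1) * Real.exp (3/2 - x₀) * Real.exp (-(1/2) * s) := by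
        refine le_trans (core_bound (m+1) x hs0) ?_
        rw [mul_assoc, mul_assoc]
        have : (0:ℝ) ≤ ((m+1).factorial : ℝ) / (1/2) ^ (m+1) := by positivity
        apply mul_le_mul_of_nonneg_left _ this
        exact mul_le_mul_of_nonneg_right hE (Real.exp_pos _).le
      have hb2 : s ^ m * Real.exp (-(s + x) ^ 2 / 2)
          ≤ (m.factorial : ℝ) / (1/2) ^ m * Real.exp (3/2 - x₀) * Real.exp (-(1/2) * s) := by
        refine le_trans (core_bound m x hs0) ?_
        rw [mul_assoc, mul_assoc]
        have : (0:ℝ) ≤ (m.factorial : ℝ) / (1/2) ^ m := by positivity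
        apply mul_le_mul_of_nonneg_left _ this
        exact mul_le_mul_of_nonneg_right hE (Real.exp_pos _).le
      have habs : |s + x| ≤ s + |x| := by
        refine le_trans (abs_add_le s x) ?_
        rw [abs_of_nonneg hs0]
      have hnorm : ‖F' x s‖ ≤ s ^ (m+1) * Real.exp (-(s + x) ^ 2 / 2)
          + |x| * (s ^ m * Real.exp (-(s + x) ^ 2 / 2)) := by
        simp only [hF', norm_neg, Real.norm_eq_abs]
        rw [abs_mul, abs_mul, abs_of_nonneg (pow_nonneg hs0 m),
          abs_of_nonneg (Real.exp_pos _).le]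
        calc s ^ m * (|s + x| * Real.exp (-(s + x) ^ 2 / 2))
            ≤ s ^ m * ((s + |x|) * Real.exp (-(s + x) ^ 2 / 2)) := by gcongr
          _ = s ^ (m+1) * Real.exp (-(s + x) ^ 2 / 2)
              + |x| * (s ^ m * Real.exp (-(s + x) ^ 2 / 2)) := by ring
      refine le_trans hnorm ?_
      have hxmul : |x| * (s ^ m * Real.exp (-(s + x) ^ 2 / 2))
          ≤ (|x₀| + 1) * (s ^ m * Real.exp (-(s + x) ^ 2 / 2)) := by
        apply mul_le_mul_of_nonneg_right hx2 (by positivity)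
      refine le_trans (add_le_add hb1 (le_trans hxmul (mul_le_mul_of_nonneg_left hb2 (by positivity)))) ?_
      exact le_of_eq (by ring))
    (((exp_neg_integrableOn_Ioi 0 (by norm_num : (0:ℝ) < 1/2)).const_mul _))
    (by
      filter_upwards with s
      intro x _
      exact hderiv x s)
  obtain ⟨-, hD⟩ := key
  have hval : (∫ s in Ioi (0:ℝ), F' x₀ s)
      = -((m:ℝ) * (∫ s in Ioi (0:ℝ), s ^ (m-1) * Real.exp (-(s + x₀) ^ 2 / 2))
          + (if m = 0 then Real.exp (-x₀ ^ 2 / 2) else 0)) := by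
    simp only [hF']
    rw [integral_neg, parts m x₀]
  have hD2 := HasDerivAt.const_mul (1 / (m.factorial : ℝ)) hD
  have hfinal : HasDerivAt (Hh (m:ℤ))
      ((1 / (m.factorial : ℝ)) * ∫ s in Ioi (0:ℝ), F' x₀ s) x₀ := by
    apply hD2.congr_of_eventuallyEq
    filter_upwards with x
    exact Hh_natCast m x
  convert hfinal using 1
  rw [hval]
  rcases m with _ | j
  · simp [Hh_neg_one]
  · have h1 : ((j+1 : ℕ) : ℤ) - 1 = (j : ℤ) := by push_cast; ring
    rw [h1, Hh_natCast j x₀, if_neg (Nat.succ_ne_zero j)]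
    have hfj : ((j.factorial : ℝ)) ≠ 0 := Nat.cast_ne_zero.2 j.factorial_ne_zero
    have hfj1 : (((j+1).factorial : ℝ)) ≠ 0 := Nat.cast_ne_zero.2 (j+1).factorial_ne_zero
    rw [Nat.factorial_succ] at hfj1 ⊢
    push_cast
    have : ((j:ℝ)+1-1) = (j:ℝ) := by ring
    field_simp
    ring

lemma core_boundM (m : ℕ) {M : ℝ} (hM : 0 < M) (x : ℝ) {s : ℝ} (hs : 0 ≤ s) :
    s ^ m * Real.exp (-(s + x) ^ 2 / 2)
      ≤ ((m.factorial : ℝ) / (M/2) ^ m * Real.exp (M ^ 2 / 2 - M * x)) * Real.exp (-(M/2) * s) := by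
  calc s ^ m * Real.exp (-(s + x) ^ 2 / 2)
      ≤ ((m.factorial : ℝ) / (M/2) ^ m * Real.exp ((M/2) * s)) *
        Real.exp (M ^ 2 / 2 - M * (s + x)) := by
        apply mul_le_mul (pow_le_exp' (by positivity) m hs) (exp_sq_le _ M)
          (Real.exp_pos _).le
        positivity
    _ = _ := by
        rw [mul_assoc, ← Real.exp_add, mul_assoc, ← Real.exp_add]
        ring_nf

lemma Hh_nonneg (n : ℤ) (x : ℝ) : 0 ≤ Hh n x := by
  rw [Hh]
  split_ifs with h1 h2
  · exact (Real.exp_pos _).le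
  · apply mul_nonneg (by positivity)
    apply setIntegral_nonneg measurableSet_Ioi
    intro t ht
    exact mul_nonneg (pow_nonneg (sub_nonneg.2 (le_of_lt ht)) _) (Real.exp_pos _).le
  · exact le_refl 0

lemma Hh_le (n : ℤ) {M : ℝ} (hM : 0 < M) :
    ∃ C : ℝ, ∀ x : ℝ, Hh n x ≤ C * Real.exp (-M * x) := by
  rcases eq_or_ne n (-1) with rfl | hn1
  · refine ⟨Real.exp (M ^ 2 / 2), fun x => ?_⟩
    rw [Hh_neg_one, ← Real.exp_add]
    exact (exp_sq_le x M).trans (Real.exp_le_exp.2 (by ring_nf; exact le_refl _))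
  rcases le_or_gt 0 n with hn | hn
  · obtain ⟨m, rfl⟩ : ∃ m : ℕ, n = (m : ℤ) := ⟨n.toNat, (Int.toNat_of_nonneg hn).symm⟩
    set D : ℝ := (m.factorial : ℝ) / (M/2) ^ m with hD
    refine ⟨(1 / (m.factorial : ℝ)) * (D * Real.exp (M ^ 2 / 2)) *
      ∫ s in Ioi (0:ℝ), Real.exp (-(M/2) * s), fun x => ?_⟩
    rw [Hh_natCast]
    have hIb : IntegrableOn (fun s => (D * Real.exp (M ^ 2 / 2 - M * x)) * Real.exp (-(M/2) * s))
        (Ioi (0:ℝ)) := (exp_neg_integrableOn_Ioi 0 (by positivity)).const_mul _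
    have hmono : (∫ s in Ioi (0:ℝ), s ^ m * Real.exp (-(s + x) ^ 2 / 2))
        ≤ ∫ s in Ioi (0:ℝ), (D * Real.exp (M ^ 2 / 2 - M * x)) * Real.exp (-(M/2) * s) := by
      apply setIntegral_mono_on (integrableOn_core m x) hIb measurableSet_Ioi
      intro s hs
      exact core_boundM m hM x (le_of_lt hs)
    calc (1 / (m.factorial : ℝ)) * ∫ s in Ioi (0:ℝ), s ^ m * Real.exp (-(s + x) ^ 2 / 2)
        ≤ (1 / (m.factorial : ℝ)) *
          ∫ s in Ioi (0:ℝ), (D * Real.exp (M ^ 2 / 2 - M * x)) * Real.exp (-(M/2) * s) := by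
          apply mul_le_mul_of_nonneg_left hmono (by positivity)
      _ = _ := by
          rw [MeasureTheory.integral_const_mul, Real.exp_sub, neg_mul, Real.exp_neg]
          field_simp
  · refine ⟨0, fun x => ?_⟩
    rw [Hh, if_neg hn1, if_neg (not_le.2 hn)]
    simp

lemma continuous_Hh (n : ℤ) : Continuous (Hh n) := by
  rcases le_or_gt 0 n with hn | hn
  · obtain ⟨m, rfl⟩ : ∃ m : ℕ, n = (m : ℤ) := ⟨n.toNat, (Int.toNat_of_nonneg hn).symm⟩
    exact continuous_iff_continuousAt.2 fun x => (hasDerivAt_Hh m x).continuousAt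
  rcases eq_or_ne n (-1) with rfl | hn1
  · have : Hh (-1) = fun x => Real.exp (-x ^ 2 / 2) := funext Hh_neg_one
    rw [this]; fun_prop
  · have : Hh n = fun _ => (0:ℝ) := by
      funext x
      rw [Hh, if_neg hn1, if_neg (not_le.2 hn)]
    rw [this]; exact continuous_const

lemma main_int (n : ℤ) {α β M : ℝ} (δ : ℝ) (hM : 0 < M) (hc : α - M * β < 0) (k : ℝ) :
    IntegrableOn (fun x => Real.exp (α * x) * Hh n (β * x - δ)) (Ioi k) volume ∧
    Tendsto (fun x => Real.exp (α * x) * Hh n (β * x - δ)) atTop (nhds 0) := by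
  obtain ⟨C, hC⟩ := Hh_le n hM
  have hpt : ∀ x : ℝ, Real.exp (α * x) * Hh n (β * x - δ)
      ≤ (C * Real.exp (M * δ)) * Real.exp ((α - M * β) * x) := by
    intro x
    have h1 := mul_le_mul_of_nonneg_left (hC (β * x - δ)) (Real.exp_pos (α * x)).le
    refine h1.trans (le_of_eq ?_)
    rw [show Real.exp (α * x) * (C * Real.exp (-M * (β * x - δ)))
        = C * (Real.exp (α * x) * Real.exp (-M * (β * x - δ))) from by ring, ← Real.exp_add]
    rw [show (C * Real.exp (M * δ)) * Real.exp ((α - M * β) * x)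
        = C * (Real.exp (M * δ) * Real.exp ((α - M * β) * x)) from by ring, ← Real.exp_add]
    ring_nf
  have hnn : ∀ x : ℝ, 0 ≤ Real.exp (α * x) * Hh n (β * x - δ) := fun x =>
    mul_nonneg (Real.exp_pos _).le (Hh_nonneg n _)
  constructor
  · have hint : IntegrableOn
        (fun x => (C * Real.exp (M * δ)) * Real.exp (-(M * β - α) * x)) (Ioi k) :=
      (exp_neg_integrableOn_Ioi k (by linarith)).const_mul _
    apply hint.mono'
    · exact (Continuous.mul (by fun_prop) ((continuous_Hh n).comp (by fun_prop))).aestronglyMeasurable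
    · filter_upwards with x
      rw [Real.norm_eq_abs, abs_of_nonneg (hnn x)]
      have := hpt x
      rw [show -(M * β - α) * x = (α - M * β) * x from by ring]
      exact this
  · apply squeeze_zero hnn hpt
    rw [show (0:ℝ) = (C * Real.exp (M * δ)) * 0 from by ring]
    apply Tendsto.const_mul
    apply Real.tendsto_exp_atBot.comp
    exact (tendsto_const_mul_atBot_of_neg (by linarith)).2 tendsto_id

/-- `I_n(k; α, β, δ) = ∫_k^∞ e^{αx}·Hh_n(βx − δ) dx`. -/
noncomputable def In (n : ℤ) (k α β δ : ℝ) : ℝ :=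
  ∫ x in Set.Ioi k, Real.exp (α * x) * Hh n (β * x - δ)

/-- For every integer `n ≥ 0` and reals `k, α, β, δ` with either
(`β > 0` and `α ≠ 0`) or (`β < 0` and `α < 0`), the integral defining `I_n(k; α, β, δ)`
converges and `I_n(k; α, β, δ) = −(e^{αk}/α)·Hh_n(βk − δ) + (β/α)·I_{n−1}(k; α, β, δ)`. -/
theorem In_recursion (n : ℕ) (k α β δ : ℝ)
    (h : (0 < β ∧ α ≠ 0) ∨ (β < 0 ∧ α < 0)) :
    IntegrableOn (fun x => Real.exp (α * x) * Hh n (β * x - δ)) (Set.Ioi k) volume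
    ∧ In n k α β δ
        = -(Real.exp (α * k) / α) * Hh n (β * k - δ) + β / α * In ((n : ℤ) - 1) k α β δ := by
  have hα : α ≠ 0 := by
    rcases h with ⟨-, hα⟩ | ⟨-, hα⟩
    exacts [hα, ne_of_lt hα]
  obtain ⟨M, hM, hc⟩ : ∃ M : ℝ, 0 < M ∧ α - M * β < 0 := by
    rcases h with ⟨hβ, -⟩ | ⟨hβ, hα'⟩
    · refine ⟨(|α| + 1) / β, by positivity, ?_⟩
      have h1 : (|α| + 1) / β * β = |α| + 1 := div_mul_cancel₀ _ hβ.ne'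
      have h2 := le_abs_self α
      nlinarith
    · refine ⟨α / (2 * β), div_pos_of_neg_of_neg hα' (by linarith), ?_⟩
      have hb : β ≠ 0 := ne_of_lt hβ
      have h1 : α / (2 * β) * β = α / 2 := by
        field_simp
      linarith [h1]
  obtain ⟨hint_n, htend_n⟩ := main_int (n : ℤ) δ hM hc k
  obtain ⟨hint_p, -⟩ := main_int ((n : ℤ) - 1) δ hM hc k
  refine ⟨hint_n, ?_⟩
  have hderiv : ∀ x : ℝ, HasDerivAt
      (fun x => -(1/α) * (Real.exp (α * x) * Hh n (β * x - δ)))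
      (-(Real.exp (α * x) * Hh n (β * x - δ))
        + (β / α) * (Real.exp (α * x) * Hh ((n : ℤ) - 1) (β * x - δ))) x := by
    intro x
    have hE : HasDerivAt (fun x : ℝ => Real.exp (α * x)) (α * Real.exp (α * x)) x := by
      have := (Real.hasDerivAt_exp (α * x)).comp x ((hasDerivAt_id x).const_mul α)
      simpa [mul_comm, Function.comp_def] using this
    have hBx : HasDerivAt (fun x : ℝ => β * x - δ) β x := by
      simpa using ((hasDerivAt_id x).const_mul β).sub_const δ
    have hH : HasDerivAt (fun x : ℝ => Hh n (β * x - δ))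
        (-Hh ((n : ℤ) - 1) (β * x - δ) * β) x :=
      (hasDerivAt_Hh n (β * x - δ)).comp (h₂ := Hh n) x hBx
    have := (hE.mul hH).const_mul (-(1/α))
    refine this.congr_deriv ?_
    field_simp
    ring
  have hf'int : IntegrableOn
      (fun x => -(Real.exp (α * x) * Hh n (β * x - δ))
        + (β / α) * (Real.exp (α * x) * Hh ((n : ℤ) - 1) (β * x - δ))) (Ioi k) :=
    hint_n.neg.add (hint_p.const_mul _)
  have htends : Tendsto (fun x => -(1/α) * (Real.exp (α * x) * Hh n (β * x - δ)))
      atTop (nhds 0) := by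
    rw [show (0:ℝ) = -(1/α) * 0 from by ring]
    exact htend_n.const_mul _
  have key := integral_Ioi_of_hasDerivAt_of_tendsto' (fun x _ => hderiv x) hf'int htends
  have h1 : IntegrableOn (fun x => -(Real.exp (α * x) * Hh (n:ℤ) (β * x - δ))) (Ioi k) volume :=
    hint_n.neg
  have h2 : IntegrableOn (fun x => (β / α) * (Real.exp (α * x) * Hh ((n:ℤ) - 1) (β * x - δ)))
      (Ioi k) volume := hint_p.const_mul _
  rw [integral_add h1 h2, integral_neg, MeasureTheory.integral_const_mul] at key
  have hIn : In n k α β δ = ∫ x in Ioi k, Real.exp (α * x) * Hh n (β * x - δ) := rfl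
  have hIp : In ((n : ℤ) - 1) k α β δ
      = ∫ x in Ioi k, Real.exp (α * x) * Hh ((n : ℤ) - 1) (β * x - δ) := rfl
  rw [hIn, hIp]
  have hkey : -(∫ x in Ioi k, Real.exp (α * x) * Hh n (β * x - δ))
      + β / α * ∫ x in Ioi k, Real.exp (α * x) * Hh ((n : ℤ) - 1) (β * x - δ)
      = (1/α) * (Real.exp (α * k) * Hh n (β * k - δ)) := by
    rw [key]; ring
  have : -(Real.exp (α * k) / α) * Hh n (β * k - δ)
      = -((1/α) * (Real.exp (α * k) * Hh n (β * k - δ))) := by ring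
  rw [this]
  linarith [hkey]
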